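/- Let m ≥ 1. Define a well-founded relation on lists of positive natural numbers with sum ≤ m by: t ≺ s if either t = s ++ [k] for some k ≥ 1 with sum t ≤ m (Build), or t is obtained from a prefix of s by strictly decreasing the last retained entry (Contract). Then ≺ admits no infinite descending chain. -/

import Mathlib

open Finset

/-- geometric sum -/
lemma geom_aux (B n : ℕ) (hB : 1 ≤ B) :
    ∑ k ∈ Finset.range n, (B - 1) * B ^ k = B ^ n - 1 := by
  induction n with
  | zero => simp
  | succ n ih =>
    rw [Finset.sum_range_succ, ih]
    have h1 : 1 ≤ B ^ n := Nat.one_le_pow _ _ hB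
    have h2 : B ^ n ≤ B ^ (n+1) := Nat.pow_le_pow_right hB (by omega)
    have h3 : (B - 1) * B ^ n = B * B ^ n - B ^ n := by
      rw [Nat.sub_mul, one_mul]
    rw [h3, pow_succ, Nat.mul_comm B (B ^ n)]
    have h5 : B ^ n ≤ B ^ n * B := Nat.le_mul_of_pos_right _ (by omega)
    omega

lemma tail_bound (B n : ℕ) (hB : 1 ≤ B) (g : ℕ → ℕ) (hg : ∀ k, g k ≤ B - 1) :
    ∑ k ∈ Finset.range n, g k * B ^ (n - 1 - k) ≤ B ^ n - 1 := by
  have hr : ∑ k ∈ Finset.range n, g k * B ^ (n - 1 - k)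
      = ∑ k ∈ Finset.range n, g (n - 1 - k) * B ^ (n - 1 - (n - 1 - k)) :=
    (Finset.sum_range_reflect (fun k => g k * B ^ (n - 1 - k)) n).symm
  rw [hr, ← geom_aux B n hB]
  apply Finset.sum_le_sum
  intro k hk
  simp only [Finset.mem_range] at hk
  have : n - 1 - (n - 1 - k) = k := by omega
  rw [this]
  exact Nat.mul_le_mul_right _ (hg _)

def padVal (m : ℕ) (l : List ℕ) : ℕ :=
  ∑ i ∈ Finset.range m, l.getD i (m + 1) * (m + 2) ^ (m - 1 - i)

lemma getD_le {m : ℕ} {l : List ℕ} (h : l.sum ≤ m) (i : ℕ) :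
    l.getD i (m + 1) ≤ m + 1 := by
  by_cases hi : i < l.length
  · rw [List.getD_eq_getElem l _ hi]
    have hmem : l[i] ∈ l := List.getElem_mem hi
    have := List.single_le_sum (l := l) (fun x _ => Nat.zero_le x) _ hmem
    omega
  · rw [List.getD_eq_default l _ (by omega)]

lemma padVal_lt {m : ℕ} {t s : List ℕ} {j : ℕ} (hj : j < m)
    (hbt : ∀ i, t.getD i (m + 1) ≤ m + 1)
    (heq : ∀ i < j, t.getD i (m + 1) = s.getD i (m + 1))
    (hlt : t.getD j (m + 1) < s.getD j (m + 1)) :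
    padVal m t < padVal m s := by
  set B := m + 2 with hB
  have hB1 : 1 ≤ B := by omega
  set Ft : ℕ → ℕ := fun i => t.getD i (m + 1) * B ^ (m - 1 - i) with hFt
  set Fs : ℕ → ℕ := fun i => s.getD i (m + 1) * B ^ (m - 1 - i) with hFs
  have split : ∀ F : ℕ → ℕ, ∑ i ∈ Finset.range m, F i
      = ∑ i ∈ Finset.range j, F i + F j + ∑ i ∈ Finset.Ico (j+1) m, F i := by
    intro F
    rw [← Finset.sum_range_add_sum_Ico F (le_of_lt hj),
      Finset.sum_eq_sum_Ico_succ_bot hj F]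
    ring
  have hA : ∑ i ∈ Finset.range j, Ft i = ∑ i ∈ Finset.range j, Fs i := by
    apply Finset.sum_congr rfl
    intro i hi
    simp only [Finset.mem_range] at hi
    simp only [hFt, hFs, heq i hi]
  set n := m - 1 - j with hn
  have htail : ∑ i ∈ Finset.Ico (j+1) m, Ft i ≤ B ^ n - 1 := by
    rw [Finset.sum_Ico_eq_sum_range]
    have hmn : m - (j + 1) = n := by omega
    rw [hmn]
    have : ∀ k ∈ Finset.range n, Ft (j + 1 + k)
        = t.getD (j + 1 + k) (m + 1) * B ^ (n - 1 - k) := by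
      intro k hk
      simp only [Finset.mem_range] at hk
      have : m - 1 - (j + 1 + k) = n - 1 - k := by omega
      simp only [hFt, this]
    rw [Finset.sum_congr rfl this]
    exact tail_bound B n hB1 _ (fun k => by have := hbt (j + 1 + k); omega)
  have hpow : 1 ≤ B ^ n := Nat.one_le_pow _ _ hB1
  have hFj : Ft j + B ^ n ≤ Fs j := by
    have : (t.getD j (m + 1) + 1) * B ^ n ≤ s.getD j (m + 1) * B ^ n :=
      Nat.mul_le_mul_right _ (by omega)
    simp only [hFt, hFs, ← hn]
    nlinarith
  have htail2 : 0 ≤ ∑ i ∈ Finset.Ico (j+1) m, Fs i := Nat.zero_le _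
  calc padVal m t = ∑ i ∈ Finset.range j, Ft i + Ft j + ∑ i ∈ Finset.Ico (j+1) m, Ft i := split Ft
    _ < ∑ i ∈ Finset.range j, Fs i + Fs j + ∑ i ∈ Finset.Ico (j+1) m, Fs i := by omega
    _ = padVal m s := (split Fs).symm

/-- One step of the local search on signature vectors: `Build` appends a positive
entry (keeping the total sum at most `m`), `Contract` truncates the list and
strictly decreases the last retained entry. -/
def SigStep (m : ℕ) (t s : List ℕ) : Prop :=
  (∃ k : ℕ, 1 ≤ k ∧ t = s ++ [k] ∧ t.sum ≤ m) ∨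
  (∃ (u : List ℕ) (a b : ℕ), a < b ∧ (u ++ [b]) <+: s ∧ t = u ++ [a])

lemma length_le_sum (l : List ℕ) (h : ∀ x ∈ l, 0 < x) : l.length ≤ l.sum := by
  induction l with
  | nil => simp
  | cons a l ih =>
    simp only [List.length_cons, List.sum_cons]
    have ha := h a List.mem_cons_self
    have := ih (fun x hx => h x (List.mem_cons_of_mem a hx))
    omega

theorem stmt_19 (m : ℕ) (hm : 1 ≤ m) :
    ¬ ∃ f : ℕ → List ℕ,
        (∀ n, (∀ x ∈ f n, 0 < x) ∧ (f n).sum ≤ m) ∧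
        (∀ n, SigStep m (f (n + 1)) (f n)) := by
  rintro ⟨f, hf, hstep⟩
  have hdec : ∀ n, padVal m (f (n + 1)) < padVal m (f n) := by
    intro n
    obtain ⟨hpos, hsum⟩ := hf n
    obtain ⟨hpos', hsum'⟩ := hf (n + 1)
    have hbt : ∀ i, (f (n+1)).getD i (m + 1) ≤ m + 1 := getD_le hsum'
    have hlen' : (f (n+1)).length ≤ m :=
      le_trans (length_le_sum _ hpos') hsum'
    rcases hstep n with ⟨k, hk, ht, _⟩ | ⟨u, a, b, hab, hpre, ht⟩
    · -- Build
      have hjm : (f n).length < m := by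
        rw [ht] at hlen'; simp at hlen'; omega
      apply padVal_lt hjm hbt
      · intro i hi
        rw [ht, List.getD_append _ _ _ _ hi]
      · rw [ht]
        have h1 : ((f n) ++ [k]).getD (f n).length (m+1) = k := by
          rw [List.getD_append_right _ _ _ _ (le_refl _)]
          simp
        have h2 : (f n).getD (f n).length (m+1) = m + 1 :=
          List.getD_eq_default _ _ (le_refl _)
        rw [h1, h2]
        have hk2 : k ≤ ((f n) ++ [k]).sum := by simp
        rw [← ht] at hk2
        omega
    · -- Contract
      obtain ⟨r, hr⟩ := hpre
      have hjm : u.length < m := by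
        rw [ht] at hlen'; simp at hlen'; omega
      apply padVal_lt hjm hbt
      · intro i hi
        rw [ht, ← hr, List.getD_append _ _ _ _ hi]
        rw [List.getD_append _ _ _ _ (by simp; omega),
          List.getD_append _ _ _ _ hi]
      · rw [ht, ← hr]
        have h1 : (u ++ [a]).getD u.length (m+1) = a := by
          rw [List.getD_append_right _ _ _ _ (le_refl _)]; simp
        have h2 : ((u ++ [b]) ++ r).getD u.length (m+1) = b := by
          rw [List.getD_append _ _ _ _ (by simp)]
          rw [List.getD_append_right _ _ _ _ (le_refl _)]; simp
        rw [h1, h2]; exact hab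
  have key : ∀ n, padVal m (f n) + n ≤ padVal m (f 0) := by
    intro n
    induction n with
    | zero => omega
    | succ n ih => have := hdec n; omega
  have := key (padVal m (f 0) + 1)
  omega
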